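/- For all real λ ≥ 0 and x with 0 ≤ x ≤ π and λx ≤ π, one has sin(λx) ≥ (1 − (λx)²/6) · λ · sin x. -/

import Mathlib

open Real

lemma sin_ge_sub_cube_div_six {x : ℝ} (hx : 0 ≤ x) : x - x ^ 3 / 6 ≤ Real.sin x := by
  have hmono : MonotoneOn (fun t => Real.sin t - t + t ^ 3 / 6) (Set.Ici 0) := by
    apply monotoneOn_of_deriv_nonneg (convex_Ici 0)
    · exact (Real.continuous_sin.sub continuous_id).add (continuous_pow 3 |>.div_const 6) |>.continuousOn
    · intro t ht
      exact ((Real.differentiable_sin.sub differentiable_id).add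
        ((differentiable_pow 3).div_const 6)).differentiableAt.differentiableWithinAt
    · intro t ht
      have : deriv (fun t => Real.sin t - t + t ^ 3 / 6) t = Real.cos t - 1 + t ^ 2 / 2 := by
        have hd : HasDerivAt (fun t => Real.sin t - t + t ^ 3 / 6)
            (Real.cos t - 1 + 3 * t ^ 2 / 6) t := by
          have := ((Real.hasDerivAt_sin t).sub (hasDerivAt_id t)).add
            (((hasDerivAt_pow 3 t)).div_const 6)
          exact this.congr_deriv (by norm_num)
        rw [hd.deriv]; ring
      rw [this]
      have := Real.one_sub_sq_div_two_le_cos (x := t)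
      linarith
  have h0 : (fun t => Real.sin t - t + t ^ 3 / 6) 0 ≤ (fun t => Real.sin t - t + t ^ 3 / 6) x :=
    hmono (by simp) (by simpa using hx) hx
  simp at h0
  linarith

/-- Lemma 4.6 (3): sin(λx) ≥ (1 − (λx)²/6)·λ·sin x. -/
theorem sin_mul_ge (l x : ℝ) (hl : 0 ≤ l) (hx0 : 0 ≤ x) (hxpi : x ≤ π)
    (hlx : l * x ≤ π) :
    Real.sin (l * x) ≥ (1 - (l * x) ^ 2 / 6) * l * Real.sin x := by
  have hlx0 : 0 ≤ l * x := mul_nonneg hl hx0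
  have hsinlx : 0 ≤ Real.sin (l * x) := Real.sin_nonneg_of_nonneg_of_le_pi hlx0 hlx
  have hsinx : 0 ≤ Real.sin x := Real.sin_nonneg_of_nonneg_of_le_pi hx0 hxpi
  have hsinle : Real.sin x ≤ x := Real.sin_le hx0
  rcases le_or_gt (1 - (l * x) ^ 2 / 6) 0 with hc | hc
  · have : (1 - (l * x) ^ 2 / 6) * l * Real.sin x ≤ 0 := by
      have := mul_nonneg hl hsinx
      nlinarith
    linarith
  · have key := sin_ge_sub_cube_div_six hlx0
    have h1 : (1 - (l * x) ^ 2 / 6) * l * Real.sin x ≤ (1 - (l * x) ^ 2 / 6) * (l * x) := by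
      have : (1 - (l * x) ^ 2 / 6) * l * Real.sin x ≤ (1 - (l * x) ^ 2 / 6) * l * x := by
        apply mul_le_mul_of_nonneg_left hsinle (mul_nonneg hc.le hl)
      linarith [this, mul_assoc (1 - (l * x) ^ 2 / 6) l x]
    have h2 : (1 - (l * x) ^ 2 / 6) * (l * x) ≤ Real.sin (l * x) := by nlinarith
    linarith
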